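/- Let 1 ≤ k < n and λ > 0. Condition on the first k rows of a random ±1 matrix and suppose there exists A ∈ binom([n], k) with |Per(M_A)| ≥ λ. Then after exposing a random (k+1)-th row of iid ±1 signs, with probability at least 1 - 2^{-(n-k)} there exists A' ∈ binom([n], k+1) with |Per(M_{A'})| ≥ λ. -/

import Mathlib

open MeasureTheory

/-- The uniform probability measure on `{-1,+1}^n` sign patterns: this models a random row of
`n` iid uniform `±1` signs. -/
noncomputable def rowMeasure (n : ℕ) : Measure (Fin n → Bool) :=
  (PMF.uniformOfFintype (Fin n → Bool)).toMeasure

/-- The `±1` sign associated to a boolean. -/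
def sgn (b : Bool) : ℝ := if b then 1 else -1

/-- `permOn M A` is the permanent of the square minor of the `m × n` matrix `M` on the columns
in `A` (and all `m` rows), when `A` has exactly `m` elements (and `0` otherwise). -/
noncomputable def permOn {m n : ℕ} (M : Matrix (Fin m) (Fin n) ℝ) (A : Finset (Fin n)) : ℝ :=
  if h : A.card = m then (Matrix.of fun r c => M r ((A.orderIsoOfFin h c : Fin n))).permanent
  else 0

/-- `extendRow M r` appends the row `r` at the bottom of the `k × n` matrix `M`. -/
def extendRow {k n : ℕ} (M : Matrix (Fin k) (Fin n) ℝ) (r : Fin n → ℝ) :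
    Matrix (Fin (k + 1)) (Fin n) ℝ :=
  Matrix.of fun p c => if h : (p : ℕ) < k then M ⟨p, h⟩ c else r c

section PermanentLemmas

open Equiv Finset Matrix

variable {R : Type*} [CommRing R]

theorem permanent_succ_column_zero' {n : ℕ} (A : Matrix (Fin n.succ) (Fin n.succ) R) :
    permanent A = ∑ i : Fin n.succ, A i 0 * permanent (A.submatrix i.succAbove Fin.succ) := by
  rw [permanent, Finset.univ_perm_fin_succ, ← Finset.univ_product_univ]
  simp only [Finset.sum_map, Equiv.toEmbedding_apply, Finset.sum_product, Matrix.submatrix]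
  refine Finset.sum_congr rfl fun i _ => Fin.cases ?_ (fun i => ?_) i
  · simp only [permanent, Finset.mul_sum]
    refine Finset.sum_congr rfl fun σ _ => ?_
    rw [Fin.prod_univ_succ]
    simp [Equiv.Perm.decomposeFin_symm_apply_zero, Equiv.Perm.decomposeFin_symm_apply_succ,
      Fin.succAbove_zero]
  · have hperm : permanent (Matrix.of fun (r c : Fin n) => A (Fin.succ i |>.succAbove r) c.succ)
        = ∑ σ : Perm (Fin n), ∏ x, A ((Fin.succ i).succAbove (i.cycleRange (σ x))) x.succ := by
      rw [← Matrix.permanent_permute_cols i.cycleRange, permanent]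
      rfl
    rw [hperm, Finset.mul_sum]
    refine Finset.sum_congr rfl fun σ _ => ?_
    rw [Fin.prod_univ_succ, Equiv.Perm.decomposeFin_symm_apply_zero]
    congr 1
    refine Finset.prod_congr rfl fun x _ => ?_
    rw [Equiv.Perm.decomposeFin_symm_apply_succ, Fin.succAbove_cycleRange]

theorem permanent_succ_row_zero' {n : ℕ} (A : Matrix (Fin n.succ) (Fin n.succ) R) :
    permanent A = ∑ j : Fin n.succ, A 0 j * permanent (A.submatrix Fin.succ j.succAbove) := by
  rw [← Matrix.permanent_transpose A, permanent_succ_column_zero']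
  refine Finset.sum_congr rfl fun i _ => ?_
  rw [← Matrix.permanent_transpose]
  simp only [Matrix.transpose_apply, Matrix.transpose_submatrix, Matrix.transpose_transpose]

theorem permanent_succ_row' {n : ℕ} (A : Matrix (Fin n.succ) (Fin n.succ) R) (i : Fin n.succ) :
    permanent A = ∑ j : Fin n.succ, A i j * permanent (A.submatrix i.succAbove j.succAbove) := by
  rw [← Matrix.permanent_permute_cols i.cycleRange⁻¹ A, permanent_succ_row_zero']
  refine Finset.sum_congr rfl fun j _ => ?_
  congr 1
  · rw [Matrix.submatrix_apply, Equiv.Perm.inv_def, Fin.cycleRange_symm_zero, id]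
  · congr 1
    ext i' j'
    rw [Matrix.submatrix_apply, Matrix.submatrix_apply, Matrix.submatrix_apply,
      Equiv.Perm.inv_def, Fin.cycleRange_symm_succ, id]

theorem permanent_row_single' {m : ℕ} (Q : Matrix (Fin (m + 1)) (Fin (m + 1)) R)
    (p c : Fin (m + 1)) (h : ∀ i, Q p i = if i = c then 1 else 0) :
    permanent Q = permanent (Q.submatrix p.succAbove c.succAbove) := by
  rw [permanent_succ_row' Q p, Finset.sum_eq_single c]
  · rw [h c, if_pos rfl, one_mul]
  · intro b _ hb
    rw [h b, if_neg hb, zero_mul]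
  · intro hc; exact absurd (Finset.mem_univ c) hc

theorem permanent_updateColumn_add' {n : Type*} [DecidableEq n] [Fintype n]
    (M : Matrix n n R) (j : n) (u v : n → R) :
    permanent (M.updateCol j (u + v)) =
      permanent (M.updateCol j u) + permanent (M.updateCol j v) := by
  simp only [permanent, ← Finset.mul_prod_erase _ _ (Finset.mem_univ j),
    Matrix.updateCol_self, Pi.add_apply, add_mul, Finset.sum_add_distrib]
  congr 1 <;>
  · refine Finset.sum_congr rfl fun σ _ => ?_
    congr 1
    refine Finset.prod_congr rfl fun i hi => ?_
    rw [Matrix.updateCol_ne (Finset.ne_of_mem_erase hi),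
      Matrix.updateCol_ne (Finset.ne_of_mem_erase hi)]

theorem permanent_updateRow_add' {n : Type*} [DecidableEq n] [Fintype n]
    (M : Matrix n n R) (j : n) (u v : n → R) :
    permanent (M.updateRow j (u + v)) =
      permanent (M.updateRow j u) + permanent (M.updateRow j v) := by
  rw [← Matrix.permanent_transpose, ← Matrix.updateCol_transpose,
    permanent_updateColumn_add', Matrix.updateCol_transpose, Matrix.updateCol_transpose,
    Matrix.permanent_transpose, Matrix.permanent_transpose]

end PermanentLemmas

section KeyLemmas

open Finset Matrix

/-- Expansion of an extended minor along its last row at the inserted column. -/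
theorem permOn_insert {k n : ℕ} (M : Matrix (Fin k) (Fin n) ℝ) {A : Finset (Fin n)}
    (hA : A.card = k) {j : Fin n} (hj : j ∉ A) (r : Fin n → ℝ) :
    permOn (extendRow M r) (insert j A) =
      r j * permOn M A + permOn (extendRow M (Function.update r j 0)) (insert j A) := by
  set A' := insert j A with hA'def
  have hA' : A'.card = k + 1 := by rw [hA'def, Finset.card_insert_of_notMem hj, hA]
  set e := A'.orderIsoOfFin hA' with he
  set N : (Fin n → ℝ) → Matrix (Fin (k + 1)) (Fin (k + 1)) ℝ :=
    fun u => Matrix.of fun p c => extendRow M u p ((e c : Fin n)) with hN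
  have hperm : ∀ u, permOn (extendRow M u) A' = (N u).permanent := by
    intro u; rw [permOn, dif_pos hA']
  have hlast : ∀ (u : Fin n → ℝ) c, N u (Fin.last k) c = u (e c) := by
    intro u c
    simp [hN, extendRow]
  have hup : ∀ u u' : Fin n → ℝ,
      Matrix.updateRow (N u') (Fin.last k) (fun c => u (e c)) = N u := by
    intro u u'
    ext p c
    rcases eq_or_ne p (Fin.last k) with hp | hp
    · subst hp; rw [Matrix.updateRow_self]; exact (hlast u c).symm
    · rw [Matrix.updateRow_ne hp]
      have hpk : (p : ℕ) < k := by
        have h1 : (p : ℕ) ≠ k := fun h => hp (Fin.ext (h.trans (Fin.val_last k).symm))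
        have h2 := p.isLt
        omega
      simp [hN, extendRow, hpk]
  set r₀ := Function.update r j 0 with hr₀
  set c₀ := e.symm ⟨j, Finset.mem_insert_self j A⟩ with hc₀
  have hec₀ : (e c₀ : Fin n) = j := by rw [hc₀, OrderIso.apply_symm_apply]
  have hrow : (fun c => r (e c)) =
      (fun c => r₀ (e c)) + r j • (Pi.single c₀ 1 : Fin (k + 1) → ℝ) := by
    funext c
    by_cases hc : c = c₀
    · subst hc
      have h1 : r₀ j = 0 := Function.update_self j 0 r
      simp [h1, hec₀, Pi.single_eq_same]
    · have hne : (e c : Fin n) ≠ j := by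
        intro h
        exact hc (e.injective (Subtype.ext (h.trans hec₀.symm)))
      simp [hr₀, Function.update_of_ne hne, Pi.single_apply, hc]
  set Q := Matrix.updateRow (N r₀) (Fin.last k) (Pi.single c₀ 1 : Fin (k + 1) → ℝ) with hQ
  have hQrow : ∀ i, Q (Fin.last k) i = if i = c₀ then 1 else 0 := by
    intro i; rw [hQ, Matrix.updateRow_self, Pi.single_apply]
  have hsplit : (N r).permanent = (N r₀).permanent + r j * Q.permanent := by
    rw [← hup r r₀, hrow, permanent_updateRow_add', hup r₀ r₀,
      Matrix.permanent_updateRow_smul]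
  have hcol : ∀ i' : Fin k, (e (c₀.succAbove i') : Fin n) = (A.orderIsoOfFin hA i' : Fin n) := by
    have hmono : StrictMono (fun i' : Fin k => (e (c₀.succAbove i') : Fin n)) := by
      intro a b hab
      exact Subtype.coe_lt_coe.mpr (e.strictMono (Fin.strictMono_succAbove c₀ hab))
    have hmem : ∀ i', (e (c₀.succAbove i') : Fin n) ∈ A := by
      intro i'
      have h1 : (e (c₀.succAbove i') : Fin n) ∈ A' := (e _).2
      have h2 : (e (c₀.succAbove i') : Fin n) ≠ j := by
        intro h
        exact Fin.succAbove_ne c₀ i' (e.injective (Subtype.ext (h.trans hec₀.symm)))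
      rcases Finset.mem_insert.mp h1 with h | h
      · exact absurd h h2
      · exact h
    have huniq := Finset.orderEmbOfFin_unique hA hmem hmono
    intro i'
    rw [congrFun huniq i', Finset.coe_orderIsoOfFin_apply]
  have hsub : Q.submatrix (Fin.last k).succAbove c₀.succAbove =
      Matrix.of (fun i i' => M i ((A.orderIsoOfFin hA i' : Fin n))) := by
    ext i i'
    rw [Matrix.submatrix_apply, Fin.succAbove_last_apply, hQ,
      Matrix.updateRow_ne (Fin.castSucc_lt_last i).ne]
    simp [hN, extendRow, Fin.coe_castSucc, i.isLt, hcol i']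
  have hQperm : Q.permanent = permOn M A := by
    rw [permanent_row_single' Q (Fin.last k) c₀ hQrow, hsub, permOn, dif_pos hA]
  rw [hperm r, hperm r₀, hsplit, hQperm]
  ring

/-- The minor only reads the appended row at the columns of `A'`. -/
theorem permOn_extend_congr {k n : ℕ} (M : Matrix (Fin k) (Fin n) ℝ) (u u' : Fin n → ℝ)
    (A' : Finset (Fin n)) (h : ∀ i ∈ A', u i = u' i) :
    permOn (extendRow M u) A' = permOn (extendRow M u') A' := by
  rw [permOn, permOn]
  split_ifs with h1
  · congr 1
    ext p c
    by_cases hp : (p : ℕ) < k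
    · simp [extendRow, hp]
    · simp only [extendRow, Matrix.of_apply, dif_neg hp]
      exact h _ (Finset.orderEmbOfFin_mem A' h1 c)
  · rfl

/-- The part of the expanded minor not depending on the sign at column `j`. -/
noncomputable def auxF {k n : ℕ} (M : Matrix (Fin k) (Fin n) ℝ) (A : Finset (Fin n))
    (j : Fin n) (b : Fin n → Bool) : ℝ :=
  permOn (extendRow M (Function.update (fun i => sgn (b i)) j 0)) (insert j A)

theorem auxF_congr {k n : ℕ} (M : Matrix (Fin k) (Fin n) ℝ) {A : Finset (Fin n)}
    {j : Fin n} (hj : j ∉ A) {b b' : Fin n → Bool} (hbb : ∀ i ∈ A, b i = b' i) :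
    auxF M A j b = auxF M A j b' := by
  apply permOn_extend_congr
  intro i hi
  rcases Finset.mem_insert.mp hi with rfl | hiA
  · simp
  · have hij : i ≠ j := fun h => hj (h ▸ hiA)
    rw [Function.update_of_ne hij, Function.update_of_ne hij, hbb i hiA]

theorem bad_step {k n : ℕ} (M : Matrix (Fin k) (Fin n) ℝ) {A : Finset (Fin n)}
    (hA : A.card = k) {lam : ℝ} (hP : lam ≤ |permOn M A|) {j : Fin n} (hj : j ∉ A)
    (b : Fin n → Bool)
    (hbad : ¬ lam ≤ |permOn (extendRow M fun i => sgn (b i)) (insert j A)|) :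
    b j = (if |permOn M A + auxF M A j b| < lam then true else false) := by
  set P := permOn M A with hPdef
  set F := auxF M A j b with hFdef
  have hins : permOn (extendRow M fun i => sgn (b i)) (insert j A) = sgn (b j) * P + F :=
    permOn_insert M hA hj (fun i => sgn (b i))
  rw [hins] at hbad
  push_neg at hbad
  have habs2 : 2 * |P| ≤ |P + F| + |(-1) * P + F| := by
    have h1 : (2 : ℝ) * P = (P + F) - ((-1) * P + F) := by ring
    calc 2 * |P| = |2 * P| := by rw [abs_mul, abs_two]
      _ = |(P + F) - ((-1) * P + F)| := by rw [h1]
      _ ≤ |P + F| + |(-1) * P + F| := abs_sub _ _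
  cases hb : b j
  · rw [hb, sgn] at hbad
    simp only [Bool.false_eq_true, if_false] at hbad
    rw [if_neg]
    intro hgood
    have : 2 * lam ≤ 2 * |P| := by linarith
    linarith
  · rw [hb, sgn, if_pos rfl, one_mul] at hbad
    rw [if_pos hbad]

end KeyLemmas

/-- Maintaining a single large minor: if among the first `k` rows `M` (with `±1` entries,
`1 ≤ k < n`) some `k`-column minor is `λ`-heavy, then after exposing a random `(k+1)`-th row
of iid uniform signs, with probability at least `1 - 2^{-(n-k)}` some `(k+1)`-column minor is
`λ`-heavy. -/
theorem maintain_single_large_minor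
    (k n : ℕ) (hk : 1 ≤ k) (hkn : k < n)
    (M : Matrix (Fin k) (Fin n) ℝ) (hM : ∀ p c, M p c = 1 ∨ M p c = -1)
    (lam : ℝ) (hlam : 0 < lam)
    (hheavy : ∃ A : Finset (Fin n), A.card = k ∧ lam ≤ |permOn M A|) :
    1 - (1 / 2 : ENNReal) ^ (n - k) ≤
      rowMeasure n
        {b | ∃ A' : Finset (Fin n), A'.card = k + 1 ∧
          lam ≤ |permOn (extendRow M fun j => sgn (b j)) A'|} := by
  classical
  obtain ⟨A, hA, hP⟩ := hheavy
  set G : Set (Fin n → Bool) :=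
    {b | ∃ A' : Finset (Fin n), A'.card = k + 1 ∧
      lam ≤ |permOn (extendRow M fun j => sgn (b j)) A'|} with hGdef
  set C : Set (Fin n → Bool) :=
    {b | ∀ j, j ∉ A → b j = (if |permOn M A + auxF M A j b| < lam then true else false)}
    with hCdef
  -- the complement of the good event is contained in `C`
  have hGC : Gᶜ ⊆ C := by
    intro b hb j hjA
    have hall : ∀ A' : Finset (Fin n), A'.card = k + 1 →
        ¬ lam ≤ |permOn (extendRow M fun i => sgn (b i)) A'| := by
      intro A' hcard hle
      exact hb ⟨A', hcard, hle⟩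
    have hcard : (insert j A).card = k + 1 := by
      rw [Finset.card_insert_of_notMem hjA, hA]
    exact bad_step M hA hP hjA b (hall (insert j A) hcard)
  -- restriction to `A` is injective on `C`
  have hinj : Set.InjOn (fun (b : Fin n → Bool) => (fun i : {x // x ∈ A} => b i)) C := by
    intro b hb b' hb' hres
    funext j
    by_cases hjA : j ∈ A
    · exact congrFun hres ⟨j, hjA⟩
    · have hbb : ∀ i ∈ A, b i = b' i := fun i hi => congrFun hres ⟨i, hi⟩
      have hFF : auxF M A j b = auxF M A j b' := auxF_congr M hjA hbb
      rw [hb j hjA, hb' j hjA, hFF]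
  -- counting
  have hcount : C.toFinset.card ≤ 2 ^ k := by
    have hmaps : ∀ b ∈ C.toFinset,
        (fun i : {x // x ∈ A} => b i) ∈ (Finset.univ : Finset ({x // x ∈ A} → Bool)) :=
      fun b _ => Finset.mem_univ _
    have hinj' : Set.InjOn (fun (b : Fin n → Bool) => (fun i : {x // x ∈ A} => b i))
        ↑C.toFinset := by rwa [Set.coe_toFinset]
    have := Finset.card_le_card_of_injOn _ hmaps hinj'
    calc C.toFinset.card ≤ (Finset.univ : Finset ({x // x ∈ A} → Bool)).card := this
      _ = 2 ^ k := by
          rw [Finset.card_univ, Fintype.card_fun, Fintype.card_coe, Fintype.card_bool, hA]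
  -- measure of `C`
  have hcardall : (Fintype.card (Fin n → Bool)) = 2 ^ n := by
    rw [Fintype.card_fun, Fintype.card_bool, Fintype.card_fin]
  have hμC : rowMeasure n C ≤ (2 : ENNReal) ^ k * ((2 : ENNReal) ^ n)⁻¹ := by
    rw [rowMeasure, PMF.toMeasure_apply_fintype]
    have hsum : ∑ x : Fin n → Bool, C.indicator (PMF.uniformOfFintype (Fin n → Bool)) x
        = ∑ x ∈ C.toFinset, (PMF.uniformOfFintype (Fin n → Bool)) x := by
      rw [Finset.sum_indicator_eq_sum_filter, Set.filter_mem_univ_eq_toFinset]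
    rw [hsum]
    have hval : ∀ x : Fin n → Bool,
        (PMF.uniformOfFintype (Fin n → Bool)) x = ((2 : ENNReal) ^ n)⁻¹ := by
      intro x
      rw [PMF.uniformOfFintype_apply, hcardall]
      norm_cast
    rw [Finset.sum_congr rfl fun x _ => hval x, Finset.sum_const, nsmul_eq_mul]
    apply mul_le_mul_left
    calc (C.toFinset.card : ENNReal) ≤ ((2 ^ k : ℕ) : ENNReal) := by
          exact_mod_cast Nat.cast_le.mpr hcount
      _ = (2 : ENNReal) ^ k := by push_cast; ring
  -- the arithmetic identity
  have h2 : (2 : ENNReal) ^ k * ((2 : ENNReal) ^ n)⁻¹ = (1 / 2 : ENNReal) ^ (n - k) := by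
    have hn : (2 : ENNReal) ^ n = 2 ^ (n - k) * 2 ^ k := by
      rw [← pow_add, Nat.sub_add_cancel hkn.le]
    rw [hn, ENNReal.mul_inv (Or.inl (by positivity)) (Or.inl (by
      exact ENNReal.pow_ne_top ENNReal.ofNat_ne_top))]
    rw [mul_comm ((2 : ENNReal) ^ (n - k))⁻¹ _, ← mul_assoc,
      ENNReal.mul_inv_cancel (by positivity) (ENNReal.pow_ne_top ENNReal.ofNat_ne_top), one_mul,
      one_div, ENNReal.inv_pow]
  have hcompl : rowMeasure n Gᶜ ≤ (1 / 2 : ENNReal) ^ (n - k) :=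
    le_trans (measure_mono hGC) (le_trans hμC h2.le)
  have hprob : IsProbabilityMeasure (rowMeasure n) := PMF.toMeasure.isProbabilityMeasure _
  have hGmeas : MeasurableSet G := .of_discrete
  have hadd : rowMeasure n G + rowMeasure n Gᶜ = 1 := by
    rw [measure_add_measure_compl hGmeas, measure_univ]
  rw [tsub_le_iff_right]
  calc (1 : ENNReal) = rowMeasure n G + rowMeasure n Gᶜ := hadd.symm
    _ ≤ rowMeasure n G + (1 / 2 : ENNReal) ^ (n - k) := add_le_add le_rfl hcompl
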